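/- For every integer m ≥ 2, the function G(u) = ∫₀^{1/√(1 + u^{2m-2})} √(1 - t²) dt, defined for u ≥ 0, has the convergent expansion G(u) = π/4 + Σ_{k≥1} (-1)^k (k/(2k+1)) u^{(2k+1)(m-1)} for 0 ≤ u < 1. -/

import Mathlib

open Real intervalIntegral in
lemma integral_sqrt_one_sub_sq_eq {a : ℝ} (h0 : 0 ≤ a) (h1 : a ≤ 1) :
    ∫ t in (0:ℝ)..a, Real.sqrt (1 - t ^ 2) =
      (Real.arcsin a + a * Real.sqrt (1 - a ^ 2)) / 2 := by
  set F : ℝ → ℝ := fun t => (Real.arcsin t + t * Real.sqrt (1 - t ^ 2)) / 2 with hF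
  have hcont : ContinuousOn F (Set.Icc 0 a) := by
    apply Continuous.continuousOn
    exact (Real.continuous_arcsin.add (continuous_id.mul
      ((continuous_const.sub (continuous_pow 2)).sqrt))).div_const 2
  have hderiv : ∀ x ∈ Set.Ioo (0:ℝ) a, HasDerivWithinAt F (Real.sqrt (1 - x ^ 2))
      (Set.Ioi x) x := by
    intro x hx
    have hx1 : x < 1 := lt_of_lt_of_le hx.2 h1
    have hxm1 : (-1:ℝ) < x := by linarith [hx.1]
    have hpos : (0:ℝ) < 1 - x ^ 2 := by nlinarith
    have hs : 0 < Real.sqrt (1 - x ^ 2) := Real.sqrt_pos.mpr hpos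
    have harc : HasDerivAt Real.arcsin (1 / Real.sqrt (1 - x ^ 2)) x :=
      Real.hasDerivAt_arcsin (by intro h; rw [h] at hxm1; linarith)
        (by intro h; rw [h] at hx1; linarith)
    have hpoly : HasDerivAt (fun t : ℝ => 1 - t ^ 2) (0 - 2 * x ^ 1) x :=
      (hasDerivAt_const x (1:ℝ)).sub (by simpa using hasDerivAt_pow 2 x)
    have hsqrt : HasDerivAt (fun t : ℝ => Real.sqrt (1 - t ^ 2))
        ((0 - 2 * x ^ 1) / (2 * Real.sqrt (1 - x ^ 2))) x :=
      hpoly.sqrt hpos.ne'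
    have hmul : HasDerivAt (fun t : ℝ => t * Real.sqrt (1 - t ^ 2))
        (1 * Real.sqrt (1 - x ^ 2) + x * ((0 - 2 * x ^ 1) / (2 * Real.sqrt (1 - x ^ 2)))) x :=
      (hasDerivAt_id x).mul hsqrt
    have htot := ((harc.add hmul).div_const 2)
    have heq : (1 / Real.sqrt (1 - x ^ 2) +
        (1 * Real.sqrt (1 - x ^ 2) + x * ((0 - 2 * x ^ 1) / (2 * Real.sqrt (1 - x ^ 2))))) / 2
        = Real.sqrt (1 - x ^ 2) := by
      have hsq : Real.sqrt (1 - x ^ 2) ^ 2 = 1 - x ^ 2 := Real.sq_sqrt hpos.le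
      field_simp
      nlinarith [hsq]
    rw [heq] at htot
    exact htot.hasDerivWithinAt
  have hint : IntervalIntegrable (fun t : ℝ => Real.sqrt (1 - t ^ 2)) MeasureTheory.volume 0 a :=
    Continuous.intervalIntegrable ((continuous_const.sub (continuous_pow 2)).sqrt) 0 a
  have key := intervalIntegral.integral_eq_sub_of_hasDeriv_right_of_le h0 hcont hderiv hint
  rw [key]
  simp [hF, Real.arcsin_zero]

/-- for `m ≥ 2` and `0 ≤ u < 1`, the function
`G(u) = ∫₀^{1/√(1+u^{2m-2})} √(1-t²) dt` has the convergent expansion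
`G(u) = π/4 + ∑_{k ≥ 1} (-1)^k (k/(2k+1)) u^{(2k+1)(m-1)}`. -/
theorem G_expansion (m : ℕ) (hm : 2 ≤ m) (u : ℝ) (hu0 : 0 ≤ u) (hu1 : u < 1) :
    HasSum
      (fun k : ℕ => (-1 : ℝ) ^ (k + 1) * (((k : ℝ) + 1) / (2 * ((k : ℝ) + 1) + 1)) *
        u ^ ((2 * (k + 1) + 1) * (m - 1)))
      ((∫ t in (0 : ℝ)..(1 / Real.sqrt (1 + u ^ (2 * m - 2))), Real.sqrt (1 - t ^ 2)) -
        Real.pi / 4) := by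
  set v : ℝ := u ^ (m - 1) with hv
  have hv0 : 0 ≤ v := pow_nonneg hu0 _
  have hv1 : v < 1 := pow_lt_one₀ hu0 hu1 (by omega)
  have hden : (0:ℝ) < 1 + v ^ 2 := by positivity
  have hsden : 0 < Real.sqrt (1 + v ^ 2) := Real.sqrt_pos.mpr hden
  have huv : u ^ (2 * m - 2) = v ^ 2 := by
    rw [hv, ← pow_mul]
    congr 1
    omega
  -- the integral value
  set a : ℝ := 1 / Real.sqrt (1 + v ^ 2) with ha
  have hsq1 : (1:ℝ) ≤ Real.sqrt (1 + v ^ 2) := by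
    nlinarith [Real.sq_sqrt hden.le, Real.sqrt_nonneg (1 + v ^ 2)]
  have ha0 : 0 ≤ a := by positivity
  have ha1 : a ≤ 1 := by
    rw [ha, div_le_one hsden]
    exact hsq1
  have hsqs : Real.sqrt (1 + v ^ 2) ^ 2 = 1 + v ^ 2 := Real.sq_sqrt hden.le
  have harcsin : Real.arcsin a = Real.pi / 2 - Real.arctan v := by
    have : a = Real.sin (Real.pi / 2 - Real.arctan v) := by
      rw [Real.sin_pi_div_two_sub, Real.cos_arctan]
    have hnn : 0 ≤ Real.arctan v := by
      rw [← Real.arctan_zero]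
      exact Real.arctan_strictMono.monotone hv0
    rw [this, Real.arcsin_sin]
    · linarith [Real.arctan_lt_pi_div_two v]
    · linarith [Real.arctan_lt_pi_div_two v]
  have h1a : (1:ℝ) - a ^ 2 = v ^ 2 / (1 + v ^ 2) := by
    rw [ha, div_pow, one_pow, hsqs]
    field_simp
    ring
  have hsqrt1a : Real.sqrt (1 - a ^ 2) = v / Real.sqrt (1 + v ^ 2) := by
    rw [h1a, Real.sqrt_div (sq_nonneg v), Real.sqrt_sq hv0]
  have haa : a * Real.sqrt (1 - a ^ 2) = v / (1 + v ^ 2) := by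
    rw [hsqrt1a, ha, div_mul_div_comm, one_mul, Real.mul_self_sqrt hden.le]
  have hint : (∫ t in (0 : ℝ)..(1 / Real.sqrt (1 + u ^ (2 * m - 2))), Real.sqrt (1 - t ^ 2))
      = Real.pi / 4 + (v / (1 + v ^ 2) - Real.arctan v) / 2 := by
    rw [huv, ← ha, integral_sqrt_one_sub_sq_eq ha0 ha1, harcsin, haa]
    ring
  rw [hint, add_sub_cancel_left]
  -- now the series
  have hnorm : ‖-(v ^ 2)‖ < 1 := by
    rw [norm_neg, Real.norm_eq_abs, abs_of_nonneg (sq_nonneg v)]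
    nlinarith
  have hgeo : HasSum (fun k : ℕ => v * (-(v ^ 2)) ^ k) (v * (1 - -(v ^ 2))⁻¹) :=
    (hasSum_geometric_of_norm_lt_one hnorm).mul_left v
  have harct : HasSum (fun k : ℕ => (-1 : ℝ) ^ k * v ^ (2 * k + 1) / ((2 * k + 1 : ℕ) : ℝ))
      (Real.arctan v) :=
    Real.hasSum_arctan (by rwa [Real.norm_eq_abs, abs_of_nonneg hv0])
  have hsum := (hgeo.sub harct).div_const 2
  have hshift := (hasSum_nat_add_iff' 1).2 hsum
  have hzero : ∑ i ∈ Finset.range 1,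
      (v * (-(v ^ 2)) ^ i - (-1 : ℝ) ^ i * v ^ (2 * i + 1) / ((2 * i + 1 : ℕ) : ℝ)) / 2 = 0 := by
    norm_num
  rw [hzero, sub_zero] at hshift
  have hfun : (fun n : ℕ =>
      (v * (-(v ^ 2)) ^ (n + 1) - (-1 : ℝ) ^ (n + 1) * v ^ (2 * (n + 1) + 1) /
        ((2 * (n + 1) + 1 : ℕ) : ℝ)) / 2) =
      (fun k : ℕ => (-1 : ℝ) ^ (k + 1) * (((k : ℝ) + 1) / (2 * ((k : ℝ) + 1) + 1)) *
        u ^ ((2 * (k + 1) + 1) * (m - 1))) := by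
    funext k
    have hexp : u ^ ((2 * (k + 1) + 1) * (m - 1)) = v ^ (2 * (k + 1) + 1) := by
      rw [hv, ← pow_mul, mul_comm]
    rw [hexp]
    have hd : ((2 * (k + 1) + 1 : ℕ) : ℝ) = 2 * ((k : ℝ) + 1) + 1 := by push_cast; ring
    rw [hd]
    have hne : (2 * ((k : ℝ) + 1) + 1) ≠ 0 := by positivity
    have hnegpow : (-(v ^ 2)) ^ (k + 1) = (-1 : ℝ) ^ (k + 1) * v ^ (2 * (k + 1)) := by
      rw [neg_pow, pow_mul]
    rw [hnegpow]
    field_simp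
    try ring
  rw [hfun] at hshift
  have hval : v * (1 - -(v ^ 2))⁻¹ = v / (1 + v ^ 2) := by
    rw [sub_neg_eq_add]
    ring
  rw [hval] at hshift
  exact hshift
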